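/- Let q be a prime power and let U = {(x, x^q + x^{q^3}, x^{q^2}) : x ∈ F_{q^4}} ⊆ F_{q^4}^3. Consider the projection map π(x) = (x^q + x^{q^3}, x^{q^2}) ∈ F_{q^4}^2. Then the unique point of the linear set L_{π(U)} of PG(1, q^4) of weight ≥ 2 is ⟨(0,1)⟩; i.e., for x, y ∈ F_{q^4} \ {0}: if x^q + x^{q^3} and y^q + y^{q^3} are not both zero, and (x^q + x^{q^3}, x^{q^2}) and (y^q + y^{q^3}, y^{q^2}) are F_{q^4}-proportional, then x and y are F_q-proportional or both x^q + x^{q^3} = 0 and y^q + y^{q^3} = 0. -/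
import Mathlib

theorem aux14 (q : ℕ) (hq0 : q ≠ 0) (K : Type*) [Field K]
    (htwo : ∀ a : K, a + a = 0)
    (fadd : ∀ a b : K, (a + b) ^ q = a ^ q + b ^ q)
    (f4 : ∀ a : K, (((a ^ q) ^ q) ^ q) ^ q = a) :
    ∀ x y : K, x ≠ 0 → y ≠ 0 →
      ¬(x ^ q + x ^ q ^ 3 = 0 ∧ y ^ q + y ^ q ^ 3 = 0) →
      (∃ c : K, c ≠ 0 ∧ y ^ q + y ^ q ^ 3 = c * (x ^ q + x ^ q ^ 3) ∧
        y ^ q ^ 2 = c * x ^ q ^ 2) →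
      (∃ c : K, c ^ q = c ∧ y = c * x) ∨
        (x ^ q + x ^ q ^ 3 = 0 ∧ y ^ q + y ^ q ^ 3 = 0) := by
  intro x y hx hy hnb hex
  obtain ⟨c, hc0, h1, h2⟩ := hex
  have heq : ∀ a b : K, a + b = 0 → a = b := by
    intro a b h
    have h2' : a + b + b = b := by rw [h, zero_add]
    rwa [add_assoc, htwo, add_zero] at h2'
  have finj : ∀ a b : K, a ^ q = b ^ q → a = b := by
    intro a b h
    have hz : (a + b) ^ q = 0 := by rw [fadd, h, htwo]
    exact heq a b ((pow_eq_zero_iff hq0).mp hz)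
  have e2 : ∀ a : K, a ^ q ^ 2 = (a ^ q) ^ q := by
    intro a; rw [← pow_mul, pow_two]
  have e3 : ∀ a : K, a ^ q ^ 3 = ((a ^ q) ^ q) ^ q := by
    intro a; rw [← pow_mul, ← pow_mul]; ring_nf
  rw [e3 x, e3 y] at h1 hnb
  rw [e2 x, e2 y] at h2
  obtain ⟨t, hyx⟩ : ∃ t : K, y = t * x := ⟨y * x⁻¹, by field_simp⟩
  have hy1 : y ^ q = t ^ q * x ^ q := by rw [hyx, mul_pow]
  have hy2 : (y ^ q) ^ q = (t ^ q) ^ q * (x ^ q) ^ q := by rw [hy1, mul_pow]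
  have hy3 : ((y ^ q) ^ q) ^ q = ((t ^ q) ^ q) ^ q * ((x ^ q) ^ q) ^ q := by
    rw [hy2, mul_pow]
  have hx1 : x ^ q ≠ 0 := pow_ne_zero _ hx
  have hx2 : (x ^ q) ^ q ≠ 0 := pow_ne_zero _ hx1
  have hx3 : ((x ^ q) ^ q) ^ q ≠ 0 := pow_ne_zero _ hx2
  have hc : c = (t ^ q) ^ q := by
    rw [hy2] at h2
    exact (mul_right_cancel₀ hx2 h2).symm
  have ha : x ^ q + ((x ^ q) ^ q) ^ q ≠ 0 := by
    intro h0
    exact hnb ⟨h0, by rw [h1, h0, mul_zero]⟩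
  have h1' : t ^ q * x ^ q + ((t ^ q) ^ q) ^ q * ((x ^ q) ^ q) ^ q
      = (t ^ q) ^ q * (x ^ q + ((x ^ q) ^ q) ^ q) := by
    rw [← hy1, ← hy3, ← hc]; exact h1
  have hs1 : (t + t ^ q) ^ q = t ^ q + (t ^ q) ^ q := fadd t (t ^ q)
  have hs2 : ((t + t ^ q) ^ q) ^ q = (t ^ q) ^ q + ((t ^ q) ^ q) ^ q := by
    rw [hs1, fadd]
  have hs3 : (((t + t ^ q) ^ q) ^ q) ^ q = ((t ^ q) ^ q) ^ q + t := by
    rw [hs2, fadd, f4]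
  have hE : x ^ q * (t + t ^ q) ^ q
      = ((x ^ q) ^ q) ^ q * ((t + t ^ q) ^ q) ^ q := by
    rw [hs2, hs1]
    linear_combination h1' + htwo (x ^ q * (t ^ q) ^ q)
      - htwo (((x ^ q) ^ q) ^ q * ((t ^ q) ^ q) ^ q)
  by_cases hu : (t + t ^ q) ^ q = 0
  · have hs0 : t + t ^ q = 0 := (pow_eq_zero_iff hq0).mp hu
    have htt : t = t ^ q := heq t (t ^ q) hs0
    exact Or.inl ⟨t, htt.symm, hyx⟩
  · exfalso
    have hE2 : ((x ^ q) ^ q) ^ q * (((t + t ^ q) ^ q) ^ q) ^ q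
        = x ^ q * (t + t ^ q) := by
      have h' := congrArg (fun z : K => (z ^ q) ^ q) hE
      simp only [mul_pow] at h'
      rw [f4 x, f4 (t + t ^ q)] at h'
      exact h'
    have hν : (t + t ^ q) ^ q * (((t + t ^ q) ^ q) ^ q) ^ q
        = (t + t ^ q) * ((t + t ^ q) ^ q) ^ q := by
      have h' : (x ^ q * ((x ^ q) ^ q) ^ q) *
          ((t + t ^ q) ^ q * (((t + t ^ q) ^ q) ^ q) ^ q)
          = (x ^ q * ((x ^ q) ^ q) ^ q) *
          ((t + t ^ q) * ((t + t ^ q) ^ q) ^ q) := by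
        linear_combination (((x ^ q) ^ q) ^ q * (((t + t ^ q) ^ q) ^ q) ^ q) * hE
          + (((x ^ q) ^ q) ^ q * ((t + t ^ q) ^ q) ^ q) * hE2
      exact mul_left_cancel₀ (mul_ne_zero hx1 hx3) h'
    have hm : (t + t ^ q) ^ q + (((t + t ^ q) ^ q) ^ q) ^ q
        = (t + t ^ q) + ((t + t ^ q) ^ q) ^ q := by
      rw [hs3, hs2, hs1]; ring
    have hfac : ((t + t ^ q) ^ q - (t + t ^ q)) *
        ((t + t ^ q) ^ q - ((t + t ^ q) ^ q) ^ q) = 0 := by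
      linear_combination ((t + t ^ q) ^ q) * hm - hν
    have hsfix : (t + t ^ q) ^ q = t + t ^ q := by
      rcases mul_eq_zero.mp hfac with h | h
      · exact sub_eq_zero.mp h
      · have hBC : (t + t ^ q) ^ q = ((t + t ^ q) ^ q) ^ q := sub_eq_zero.mp h
        exact (finj (t + t ^ q) ((t + t ^ q) ^ q) hBC).symm
    have hsne : t + t ^ q ≠ 0 := by
      intro h0; exact hu (by rw [h0]; exact zero_pow hq0)
    have hx13 : x ^ q = ((x ^ q) ^ q) ^ q := by
      have hE' : x ^ q * (t + t ^ q) = ((x ^ q) ^ q) ^ q * (t + t ^ q) := by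
        calc x ^ q * (t + t ^ q) = x ^ q * (t + t ^ q) ^ q := by rw [hsfix]
        _ = ((x ^ q) ^ q) ^ q * ((t + t ^ q) ^ q) ^ q := hE
        _ = ((x ^ q) ^ q) ^ q * (t + t ^ q) := by rw [hsfix, hsfix]
      exact mul_right_cancel₀ hsne hE'
    exact ha (by rw [← hx13]; exact htwo _)

/-- For `q` even, in the projection of `U = {(x, x^q+x^{q^3}, x^{q^2})}` the unique point
of weight ≥ 2 is `⟨(0,1)⟩`: if `(x^q+x^{q^3}, x^{q^2})` and `(y^q+y^{q^3}, y^{q^2})` are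
`F_{q^4}`-proportional and not both first coordinates vanish, then `x, y` are
`F_q`-proportional or both first coordinates vanish. -/
theorem stmt14 (q : ℕ) (hq : ∃ p n : ℕ, p.Prime ∧ 0 < n ∧ q = p ^ n) (hq2 : Even q)
    (K : Type*) [Field K] [Fintype K] (hK : Fintype.card K = q ^ 4) :
    ∀ x y : K, x ≠ 0 → y ≠ 0 →
      ¬(x ^ q + x ^ q ^ 3 = 0 ∧ y ^ q + y ^ q ^ 3 = 0) →
      (∃ c : K, c ≠ 0 ∧ y ^ q + y ^ q ^ 3 = c * (x ^ q + x ^ q ^ 3) ∧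
        y ^ q ^ 2 = c * x ^ q ^ 2) →
      (∃ c : K, c ^ q = c ∧ y = c * x) ∨
        (x ^ q + x ^ q ^ 3 = 0 ∧ y ^ q + y ^ q ^ 3 = 0) := by
  obtain ⟨p, n, hp, hn, rfl⟩ := hq
  have hp2 : p = 2 := by
    have h2 : (2 : ℕ) ∣ p ^ n := hq2.two_dvd
    have hdp := Nat.Prime.dvd_of_dvd_pow Nat.prime_two h2
    exact ((Nat.prime_dvd_prime_iff_eq Nat.prime_two hp).mp hdp).symm
  subst hp2
  -- characteristic is 2
  obtain ⟨r, hr⟩ := CharP.exists K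
  haveI := hr
  have hrp : r.Prime := CharP.char_is_prime K r
  obtain ⟨m, _, hcard⟩ := FiniteField.card K r
  have hr2 : r = 2 := by
    have hrm : r ^ (m : ℕ) = 2 ^ (n * 4) := by rw [← hcard, hK, ← pow_mul]
    have hdvd : r ∣ r ^ (m : ℕ) := dvd_pow_self r m.pos.ne'
    rw [hrm] at hdvd
    have := Nat.Prime.dvd_of_dvd_pow hrp hdvd
    exact (Nat.prime_dvd_prime_iff_eq hrp Nat.prime_two).mp this
  subst hr2
  haveI : Fact (Nat.Prime 2) := ⟨Nat.prime_two⟩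
  have htwo : ∀ a : K, a + a = 0 := fun a => CharTwo.add_self_eq_zero a
  have fadd : ∀ a b : K, (a + b) ^ 2 ^ n = a ^ 2 ^ n + b ^ 2 ^ n := fun a b =>
    add_pow_char_pow a b 2 n
  have f4 : ∀ a : K, (((a ^ 2 ^ n) ^ 2 ^ n) ^ 2 ^ n) ^ 2 ^ n = a := by
    intro a
    have h1 : (((a ^ 2 ^ n) ^ 2 ^ n) ^ 2 ^ n) ^ 2 ^ n = a ^ Fintype.card K := by
      rw [← pow_mul, ← pow_mul, ← pow_mul, hK]
      congr 1
      ring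
    rw [h1, FiniteField.pow_card]
  have hq0 : (2 : ℕ) ^ n ≠ 0 := by positivity
  exact aux14 (2 ^ n) hq0 K htwo fadd f4
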